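/- Let f : {-1,1}^5 → {-1,1} be defined by f(x) = sgn(x_1 - 3x_2 + x_3 - x_4 + 3x_5), and let Maj_5(x) = sgn(x_1 + x_2 + x_3 + x_4 + x_5). Then for p = 2/5, Φ_p(f) > Φ_p(Maj_5); that is, the 5-bit majority does not maximize Φ_{2/5} among unbiased Boolean functions. -/

import Mathlib

open Finset

noncomputable section

/-- Sign function: `1` for positive arguments, `-1` otherwise. -/
def sgn (t : ℝ) : ℝ := if 0 < t then 1 else -1

/-- Real value of a Boolean sign: `true ↦ 1`, `false ↦ -1`. -/
def val (b : Bool) : ℝ := if b then 1 else -1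

/-- Fourier coefficient `f̂(S) = 2^{-n} ∑_{x ∈ {-1,1}^n} f(x) ∏_{i∈S} x_i`. -/
def fCoeff (n : ℕ) (f : (Fin n → ℝ) → ℝ) (S : Finset (Fin n)) : ℝ :=
  (2 ^ n : ℝ)⁻¹ * ∑ b : Fin n → Bool, f (fun i => val (b i)) * ∏ i ∈ S, val (b i)

/-- Multilinear extension `F(z) = ∑_S f̂(S) ∏_{i∈S} z_i`. -/
def mlin (n : ℕ) (f : (Fin n → ℝ) → ℝ) (z : Fin n → ℝ) : ℝ :=
  ∑ S : Finset (Fin n), fCoeff n f S * ∏ i ∈ S, z i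

/-- Value of an erasure symbol: `0 ↦ 0`, `1 ↦ 1`, `2 ↦ -1`. -/
def eval3 (k : Fin 3) : ℝ := if k = 0 then 0 else if k = 1 then 1 else -1

/-- Erasure weight: `Pr[z_i = 0] = 1 - p`, `Pr[z_i = 1] = Pr[z_i = -1] = p/2`. -/
def wt (p : ℝ) (k : Fin 3) : ℝ := if k = 0 then 1 - p else p / 2

/-- `Φ_p(f) = E_z |F(z)|` under the erasure distribution at rate `p`. -/
def Phi (n : ℕ) (p : ℝ) (f : (Fin n → ℝ) → ℝ) : ℝ :=
  ∑ e : Fin n → Fin 3, (∏ i, wt p (e i)) * |mlin n f (fun i => eval3 (e i))|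

/-- `f(x) = sgn(x₁ - 3x₂ + x₃ - x₄ + 3x₅)`. -/
def f5 (x : Fin 5 → ℝ) : ℝ := sgn (x 0 - 3 * x 1 + x 2 - x 3 + 3 * x 4)

/-- `Maj₅(x) = sgn(x₁ + x₂ + x₃ + x₄ + x₅)`. -/
def maj5 (x : Fin 5 → ℝ) : ℝ := sgn (x 0 + x 1 + x 2 + x 3 + x 4)


lemma sum_pi_succ {n : ℕ} {β M : Type*} [Fintype β] [AddCommMonoid M]
    (F : (Fin (n+1) → β) → M) :
    ∑ g : Fin (n+1) → β, F g = ∑ a : β, ∑ g : Fin n → β, F (Matrix.vecCons a g) := by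
  rw [← (Fin.consEquiv (fun _ => β)).sum_comp F, Fintype.sum_prod_type]
  rfl

lemma sum_pi_zero {β M : Type*} [Fintype β] [AddCommMonoid M]
    (F : (Fin 0 → β) → M) :
    ∑ g : Fin 0 → β, F g = F ![] := by
  rw [Finset.sum_eq_single ![]] <;> simp [Subsingleton.elim _ (![] : Fin 0 → β)]

lemma mlin_eq (n : ℕ) (f : (Fin n → ℝ) → ℝ) (z : Fin n → ℝ) :
    mlin n f z = (2 ^ n : ℝ)⁻¹ *
      ∑ b : Fin n → Bool, f (fun i => val (b i)) * ∏ i, (1 + z i * val (b i)) := by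
  simp only [mlin, fCoeff, mul_assoc, Finset.sum_mul, Finset.mul_sum]
  rw [Finset.sum_comm]
  refine Finset.sum_congr rfl fun b _ => ?_
  simp only [← Finset.mul_sum]
  congr 1
  congr 1
  have h := Finset.prod_add (fun i => z i * val (b i)) (fun _ => (1:ℝ)) Finset.univ
  simp only [Finset.prod_const_one, mul_one, Finset.powerset_univ] at h
  calc ∑ S : Finset (Fin n), (∏ i ∈ S, val (b i)) * ∏ i ∈ S, z i
      = ∑ S : Finset (Fin n), ∏ i ∈ S, (z i * val (b i)) := by
        refine Finset.sum_congr rfl fun S _ => ?_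
        rw [← Finset.prod_mul_distrib]
        exact Finset.prod_congr rfl fun i _ => mul_comm _ _
    _ = ∏ i, (z i * val (b i) + 1) := h.symm
    _ = ∏ i, (1 + z i * val (b i)) := Finset.prod_congr rfl fun i _ => add_comm _ _

set_option maxHeartbeats 2000000 in
lemma mlin_f5 (z : Fin 5 → ℝ) :
    mlin 5 f5 z = (1/4)*z 0 - (1/2)*z 1 + (1/4)*z 2 - (1/4)*z 3 + (1/2)*z 4
      + (1/4)*(z 0*z 2*z 3) + (1/4)*(z 0*z 1*z 4) + (1/4)*(z 1*z 2*z 4)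
      - (1/4)*(z 1*z 3*z 4) + (1/4)*(z 0*z 1*z 2*z 3*z 4) := by
  rw [mlin_eq]
  simp only [sum_pi_succ, sum_pi_zero, Fintype.sum_bool]
  simp only [f5, _root_.val, sgn, Matrix.cons_val_zero, Matrix.cons_val_one, Matrix.head_cons,
    Matrix.cons_val_two, Matrix.cons_val_three, Matrix.cons_val_four,
    Matrix.tail_cons, Fin.prod_univ_five, if_true, if_false]
  norm_num
  ring

set_option maxHeartbeats 2000000 in
lemma mlin_maj5 (z : Fin 5 → ℝ) :
    mlin 5 maj5 z = (3/8)*(z 0 + z 1 + z 2 + z 3 + z 4)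
      - (1/8)*(z 0*z 1*z 2 + z 0*z 1*z 3 + z 0*z 2*z 3 + z 1*z 2*z 3
        + z 0*z 1*z 4 + z 0*z 2*z 4 + z 1*z 2*z 4 + z 0*z 3*z 4
        + z 1*z 3*z 4 + z 2*z 3*z 4)
      + (3/8)*(z 0*z 1*z 2*z 3*z 4) := by
  rw [mlin_eq]
  simp only [sum_pi_succ, sum_pi_zero, Fintype.sum_bool]
  simp only [maj5, _root_.val, sgn, Matrix.cons_val_zero, Matrix.cons_val_one, Matrix.head_cons,
    Matrix.cons_val_two, Matrix.cons_val_three, Matrix.cons_val_four,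
    Matrix.tail_cons, Fin.prod_univ_five, if_true, if_false]
  norm_num
  ring

lemma abs_ite_real (x : ℝ) : |x| = if 0 ≤ x then x else -x := by
  split
  · exact abs_of_nonneg ‹_›
  · exact abs_of_neg (lt_of_not_ge ‹_›)

lemma eval3_0 : eval3 0 = 0 := rfl
lemma eval3_1 : eval3 1 = 1 := rfl
lemma eval3_2 : eval3 2 = -1 := rfl
lemma wt_0 (p : ℝ) : wt p 0 = 1 - p := rfl
lemma wt_1 (p : ℝ) : wt p 1 = p / 2 := rfl
lemma wt_2 (p : ℝ) : wt p 2 = p / 2 := rfl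

set_option maxHeartbeats 20000000 in
lemma Phi_f5 : Phi 5 (2/5) f5 = 2689/6250 := by
  simp only [Phi, sum_pi_succ, sum_pi_zero, Fin.sum_univ_three, mlin_f5,
    Fin.prod_univ_five, Matrix.cons_val_zero, Matrix.cons_val_one, Matrix.head_cons,
    Matrix.cons_val_two, Matrix.cons_val_three, Matrix.cons_val_four, Matrix.tail_cons,
    eval3_0, eval3_1, eval3_2, wt_0, wt_1, wt_2]
  norm_num [abs_ite_real]

set_option maxHeartbeats 4000000 in
lemma Phi_maj5 : Phi 5 (2/5) maj5 = 5363/12500 := by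
  simp only [Phi, sum_pi_succ, sum_pi_zero, Fin.sum_univ_three, mlin_maj5,
    Fin.prod_univ_five, Matrix.cons_val_zero, Matrix.cons_val_one, Matrix.head_cons,
    Matrix.cons_val_two, Matrix.cons_val_three, Matrix.cons_val_four, Matrix.tail_cons,
    eval3_0, eval3_1, eval3_2, wt_0, wt_1, wt_2, abs_ite_real]
  norm_num

theorem stmt0 : Phi 5 (2/5) f5 > Phi 5 (2/5) maj5 := by
  rw [Phi_f5, Phi_maj5]; norm_num
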